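/- The function d_ν(x,y) := |x−y|/(ν+x+y) defines a metric on the nonnegative reals [0,∞) for every fixed ν > 0; that is, d_ν is symmetric, vanishes exactly on the diagonal, and satisfies the triangle inequality on [0,∞). -/
import Mathlib


noncomputable def dnu (ν x y : ℝ) : ℝ := |x - y| / (ν + x + y)

theorem dnu_is_metric_on_nonneg (ν : ℝ) (hν : 0 < ν) :
    (∀ x y : ℝ, 0 ≤ x → 0 ≤ y → dnu ν x y = dnu ν y x) ∧
    (∀ x y : ℝ, 0 ≤ x → 0 ≤ y → (dnu ν x y = 0 ↔ x = y)) ∧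
    (∀ x y z : ℝ, 0 ≤ x → 0 ≤ y → 0 ≤ z →
      dnu ν x z ≤ dnu ν x y + dnu ν y z) := by
  refine ⟨?_, ?_, ?_⟩
  · intro x y hx hy
    unfold dnu
    rw [abs_sub_comm]
    ring_nf
  · intro x y hx hy
    unfold dnu
    have hd : 0 < ν + x + y := by linarith
    constructor
    · intro h
      have := div_eq_zero_iff.mp h
      rcases this with h' | h'
      · have := abs_eq_zero.mp h'; linarith
      · linarith
    · intro h; subst h; simp
  · intro x y z hx hy hz
    unfold dnu
    have d1 : 0 < ν + x + z := by linarith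
    have d2 : 0 < ν + x + y := by linarith
    have d3 : 0 < ν + y + z := by linarith
    rw [div_add_div _ _ (ne_of_gt d2) (ne_of_gt d3), div_le_div_iff₀ d1 (by positivity)]
    have hA : 0 ≤ (ν + x + z) * (ν + y + z) := by positivity
    have hB : 0 ≤ (ν + x + z) * (ν + x + y) := by positivity
    rcases le_total x y with h1 | h1 <;> rcases le_total y z with h2 | h2
    · -- x ≤ y ≤ z
      rw [abs_of_nonpos (by linarith : x - z ≤ 0), abs_of_nonpos (by linarith : x - y ≤ 0),
        abs_of_nonpos (by linarith : y - z ≤ 0)]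
      nlinarith [mul_nonneg (mul_nonneg (sub_nonneg.2 h1) (sub_nonneg.2 h2))
        (sub_nonneg.2 (h1.trans h2))]
    · -- x ≤ y, z ≤ y
      rcases le_total x z with h3 | h3
      · rw [abs_of_nonpos (by linarith : x - z ≤ 0), abs_of_nonpos (by linarith : x - y ≤ 0),
          abs_of_nonneg (by linarith : 0 ≤ y - z)]
        nlinarith [mul_nonneg (sub_nonneg.2 h2) (mul_nonneg d3.le (by linarith : (0:ℝ) ≤ ν + 2*x)),
          mul_nonneg (sub_nonneg.2 h2) hB,
          mul_nonneg (mul_nonneg (sub_nonneg.2 h3) (sub_nonneg.2 h2)) d3.le]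
      · rw [abs_of_nonneg (by linarith : 0 ≤ x - z), abs_of_nonpos (by linarith : x - y ≤ 0),
          abs_of_nonneg (by linarith : 0 ≤ y - z)]
        nlinarith [mul_nonneg (sub_nonneg.2 h1) hA,
          mul_nonneg (sub_nonneg.2 h1) (mul_nonneg d2.le (by linarith : (0:ℝ) ≤ ν + 2*z))]
    · -- y ≤ x, y ≤ z
      rcases le_total x z with h3 | h3
      · rw [abs_of_nonpos (by linarith : x - z ≤ 0), abs_of_nonneg (by linarith : 0 ≤ x - y),
          abs_of_nonpos (by linarith : y - z ≤ 0)]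
        nlinarith [mul_nonneg (sub_nonneg.2 h1) hA,
          mul_nonneg (sub_nonneg.2 h1) hB,
          mul_nonneg (mul_nonneg (sub_nonneg.2 h3) (sub_nonneg.2 h1)) d2.le]
      · rw [abs_of_nonneg (by linarith : 0 ≤ x - z), abs_of_nonneg (by linarith : 0 ≤ x - y),
          abs_of_nonpos (by linarith : y - z ≤ 0)]
        nlinarith [mul_nonneg (sub_nonneg.2 h2) hA,
          mul_nonneg (sub_nonneg.2 h2) hB,
          mul_nonneg (mul_nonneg (sub_nonneg.2 h3) (sub_nonneg.2 h2)) d3.le]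
    · -- z ≤ y ≤ x
      rw [abs_of_nonneg (by linarith : 0 ≤ x - z), abs_of_nonneg (by linarith : 0 ≤ x - y),
        abs_of_nonneg (by linarith : 0 ≤ y - z)]
      nlinarith [mul_nonneg (mul_nonneg (sub_nonneg.2 h1) (sub_nonneg.2 h2))
        (sub_nonneg.2 (h2.trans h1))]
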